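/- For Freeman's k=10 family, r(u)=25u^4+25u^3+15u^2+5u+1 divides Φ_10(p(u)) in ℤ[u], where Φ_10(x)=x^4-x^3+x^2-x+1 is the 10th cyclotomic polynomial and p(u)=25u^4+25u^3+25u^2+10u+3. -/
import Mathlib

open Polynomial

private lemma cyclotomic_ten : cyclotomic 10 ℤ = X ^ 4 - X ^ 3 + X ^ 2 - X + 1 := by
  have hprod := prod_cyclotomic_eq_X_pow_sub_one (n := 10) (by norm_num) ℤ
  have hdiv : Nat.divisors 10 = {1, 2, 5, 10} := by decide
  rw [hdiv] at hprod
  have h5 : cyclotomic 5 ℤ = X ^ 4 + X ^ 3 + X ^ 2 + X + 1 := by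
    haveI : Fact (Nat.Prime 5) := ⟨by norm_num⟩
    rw [cyclotomic_prime]
    simp [Finset.sum_range_succ]
    ring
  rw [Finset.prod_insert (by decide), Finset.prod_insert (by decide),
    Finset.prod_insert (by decide), Finset.prod_singleton, cyclotomic_one,
    cyclotomic_two, h5] at hprod
  have hg : ((X - 1) * ((X + 1) * ((X ^ 4 + X ^ 3 + X ^ 2 + X + 1) : Polynomial ℤ))) ≠ 0 := by
    intro h
    have := congrArg (fun q => q.coeff 0) h
    simp at this
  apply mul_left_cancel₀ hg
  linear_combination hprod

theorem freeman10_cyclotomic_condition :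
    cyclotomic 10 ℤ = X ^ 4 - X ^ 3 + X ^ 2 - X + 1 ∧
    (25 * X ^ 4 + 25 * X ^ 3 + 15 * X ^ 2 + 5 * X + 1 : Polynomial ℤ) ∣
      (cyclotomic 10 ℤ).comp
        (25 * X ^ 4 + 25 * X ^ 3 + 25 * X ^ 2 + 10 * X + 3) := by
  refine ⟨cyclotomic_ten, ?_⟩
  refine ⟨15625 * X ^ 12 + 46875 * X ^ 11 + 100000 * X ^ 10 + 143750 * X ^ 9 +
    165000 * X ^ 8 + 147500 * X ^ 7 + 108250 * X ^ 6 + 63375 * X ^ 5 + 30100 * X ^ 4 +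
    11000 * X ^ 3 + 3060 * X ^ 2 + 555 * X + 61, ?_⟩
  rw [cyclotomic_ten]
  simp only [sub_comp, add_comp, X_comp, pow_comp, one_comp]
  ring
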